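/- Let R be a LID, let H be a complex Hilbert space, let (A_v)_{v∈R}, (M_u)_{u∈R∖{0}} be an isometric anti-representation of the affine semigroup of R on H, and let φ ∈ H be additively compact, i.e. the orbit {A_v φ : v ∈ R} is precompact in the norm topology. Then for every ε > 0 the set {u ∈ R : ‖A_u φ − φ‖ < ε} is DC*, i.e. it belongs to every ultrafilter p ∈ 𝒢; equivalently, p-lim_u ‖A_u φ − φ‖ = 0 for every p ∈ 𝒢. -/
import Mathlib


open Filter

/-- The sum of two ultrafilters on an additive structure:
`E ∈ p + q` iff `{u | {v | u + v ∈ E} ∈ q} ∈ p`. -/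
def uadd {R : Type*} [Add R] (p q : Ultrafilter R) : Ultrafilter R :=
  p.bind fun u => q.map fun v => u + v

/-- The product of two ultrafilters on a multiplicative structure:
`E ∈ p · q` iff `{u | {v | u · v ∈ E} ∈ q} ∈ p`. -/
def umul {R : Type*} [Mul R] (p q : Ultrafilter R) : Ultrafilter R :=
  p.bind fun u => q.map fun v => u * v

/-- A set of ultrafilters is additively invariant if it is stable under `q ↦ pure v + q`. -/
def addInvariant {R : Type*} [Add R] (Y : Set (Ultrafilter R)) : Prop :=
  ∀ v : R, ∀ q ∈ Y, uadd (pure v) q ∈ Y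

/-- A set of ultrafilters is multiplicatively invariant if it is stable under
`q ↦ pure u · q` for all `u ≠ 0`. -/
def mulInvariant {R : Type*} [Mul R] [Zero R] (Y : Set (Ultrafilter R)) : Prop :=
  ∀ u : R, u ≠ 0 → ∀ q ∈ Y, umul (pure u) q ∈ Y

/-- The set of additive minimal idempotent ultrafilters: nonprincipal additive idempotents
belonging to some minimal nonempty closed additively invariant set. -/
def AMI (R : Type*) [Add R] : Set (Ultrafilter R) :=
  {p | (∀ u : R, p ≠ pure u) ∧ uadd p p = p ∧
    ∃ Y : Set (Ultrafilter R), p ∈ Y ∧ IsClosed Y ∧ addInvariant Y ∧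
      ∀ Z ⊆ Y, Z.Nonempty → IsClosed Z → addInvariant Z → Z = Y}

/-- The set of multiplicative minimal idempotent ultrafilters: nonprincipal multiplicative
idempotents containing `R \ {0}` and belonging to some minimal nonempty closed
multiplicatively invariant set of ultrafilters containing `R \ {0}`. -/
def MMI (R : Type*) [Mul R] [Zero R] : Set (Ultrafilter R) :=
  {p | (∀ u : R, p ≠ pure u) ∧ {u : R | u ≠ 0} ∈ p ∧ umul p p = p ∧
    ∃ Y : Set (Ultrafilter R), p ∈ Y ∧ IsClosed Y ∧ (∀ q ∈ Y, {u : R | u ≠ 0} ∈ q) ∧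
      mulInvariant Y ∧ ∀ Z ⊆ Y, Z.Nonempty → IsClosed Z → mulInvariant Z → Z = Y}

/-- The family 𝒢: ultrafilters in the closure of the additive minimal idempotents that are
also multiplicative minimal idempotents. -/
def dcG (R : Type*) [Add R] [Mul R] [Zero R] : Set (Ultrafilter R) :=
  closure (AMI R) ∩ MMI R

/-- A countable infinite integral domain `R` is a large ideal domain (LID) when, for every
nonzero `x`, the ideal `xR` has finite index as an additive subgroup of `R`. -/
def IsLID (R : Type*) [CommRing R] : Prop :=
  ∀ x : R, x ≠ 0 → (Ideal.span ({x} : Set R)).toAddSubgroup.FiniteIndex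

/-- A vector is additively compact when its orbit under the additive part of the
anti-representation is precompact in the norm topology. -/
def addOrbitCompact {R H : Type*} [NormedAddCommGroup H] [InnerProductSpace ℂ H]
    (A : R → H →ₗᵢ[ℂ] H) (φ : H) : Prop :=
  IsCompact (closure (Set.range fun v : R => A v φ))

/-- A vector is multiplicatively compact when its orbit under the multiplicative part
(over nonzero indices) of the anti-representation is precompact in the norm topology. -/
def mulOrbitCompact {R H : Type*} [Zero R] [NormedAddCommGroup H] [InnerProductSpace ℂ H]
    (M : R → H →ₗᵢ[ℂ] H) (φ : H) : Prop :=
  IsCompact (closure (Set.range fun u : {u : R // u ≠ (0 : R)} => M u.1 φ))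

lemma mem_uadd' {R : Type*} [Add R] (p q : Ultrafilter R) (E : Set R) :
    E ∈ uadd p q ↔ {u | {v | u + v ∈ E} ∈ q} ∈ p := by
  simp [uadd, Ultrafilter.bind, Filter.mem_bind', Ultrafilter.mem_map]
  rfl

lemma key {R : Type*} [AddCommMonoid R]
    {H : Type*} [NormedAddCommGroup H] [InnerProductSpace ℂ H]
    (A : R → H →ₗᵢ[ℂ] H)
    (hAadd : ∀ (v w : R) (φ : H), A v (A w φ) = A (v + w) φ)
    (φ : H) (hφ : IsCompact (closure (Set.range fun v : R => A v φ)))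
    (p : Ultrafilter R) (hp : uadd p p = p)
    (ε : ℝ) (hε : 0 < ε) : {u : R | ‖A u φ - φ‖ < ε} ∈ p := by
  set f : R → H := fun v => A v φ with hf
  obtain ⟨ψ, hψK, hψlim⟩ := hφ.ultrafilter_le_nhds (p.map f)
    (by
      rw [Ultrafilter.coe_map, Filter.le_principal_iff, Filter.mem_map]
      exact Filter.univ_mem' fun v => subset_closure (Set.mem_range_self v))
  rw [Ultrafilter.coe_map] at hψlim
  have hlim : Filter.Tendsto f ↑p (nhds ψ) := hψlim
  -- step: for all δ > 0, {u | ‖A u ψ - ψ‖ < δ} ∈ p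
  have hmid : ∀ δ : ℝ, 0 < δ → {u : R | ‖A u ψ - ψ‖ < δ} ∈ p := by
    intro δ hδ
    have hE : {w : R | ‖f w - ψ‖ < δ / 2} ∈ p := by
      have := hlim (Metric.ball_mem_nhds ψ (show (0:ℝ) < δ/2 by positivity))
      simpa [Set.preimage, Metric.mem_ball, dist_eq_norm] using this
    have hS : {u : R | {v : R | u + v ∈ {w : R | ‖f w - ψ‖ < δ / 2}} ∈ p} ∈ p := by
      rw [← mem_uadd', hp]; exact hE
    refine p.toFilter.mem_of_superset hS ?_
    intro u hu
    obtain ⟨v, hv1, hv2⟩ := Filter.nonempty_of_mem (Filter.inter_mem hu hE)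
    simp only [Set.mem_setOf_eq] at hv1 hv2 ⊢
    have h1 : ‖A u ψ - A u (f v)‖ = ‖ψ - f v‖ := by
      rw [← map_sub, (A u).norm_map]
    have h2 : A u (f v) = f (u + v) := hAadd u v φ
    calc ‖A u ψ - ψ‖ ≤ ‖A u ψ - A u (f v)‖ + ‖A u (f v) - ψ‖ := norm_sub_le_norm_sub_add_norm_sub _ _ _
      _ = ‖ψ - f v‖ + ‖f (u + v) - ψ‖ := by rw [h1, h2]
      _ < δ / 2 + δ / 2 := by
          apply add_lt_add _ hv1
          rw [norm_sub_rev]; exact hv2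
      _ = δ := by ring
  -- choose v₀ with ‖f v₀ - ψ‖ < ε/4
  obtain ⟨b, hbmem, hbd⟩ := Metric.mem_closure_iff.mp hψK (ε / 4) (by positivity)
  obtain ⟨v₀, rfl⟩ := hbmem
  refine p.toFilter.mem_of_superset (hmid (ε / 2) (by positivity)) ?_
  intro u hu
  simp only [Set.mem_setOf_eq] at hu ⊢
  have h3 : A u (f v₀) = A v₀ (A u φ) := by
    rw [hAadd, hAadd, add_comm]
  have h4 : ‖A u φ - φ‖ = ‖A u (f v₀) - f v₀‖ := by
    rw [h3, hf]; simp only []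
    rw [← map_sub, (A v₀).norm_map]
  have hd : ‖f v₀ - ψ‖ < ε / 4 := by
    rw [norm_sub_rev, ← dist_eq_norm]; exact hbd
  calc ‖A u φ - φ‖ = ‖A u (f v₀) - f v₀‖ := h4
    _ ≤ ‖A u (f v₀) - A u ψ‖ + ‖A u ψ - ψ‖ + ‖ψ - f v₀‖ := by
        rw [add_assoc]
        refine (norm_sub_le_norm_sub_add_norm_sub _ (A u ψ) _).trans ?_
        gcongr
        exact norm_sub_le_norm_sub_add_norm_sub _ ψ _
    _ = ‖f v₀ - ψ‖ + ‖A u ψ - ψ‖ + ‖f v₀ - ψ‖ := by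
        rw [← map_sub, (A u).norm_map, norm_sub_rev ψ]
    _ < ε / 4 + ε / 2 + ε / 4 := by exact add_lt_add (add_lt_add hd hu) hd
    _ = ε := by ring


/-- If `φ` is additively compact for an isometric anti-representation of the
affine semigroup of a LID `R` on a complex Hilbert space `H`, then for every `ε > 0` the set
`{u ∈ R : ‖A_u φ − φ‖ < ε}` belongs to every ultrafilter `p ∈ 𝒢` (i.e. it is DC*);
equivalently `p`-lim of `‖A_u φ − φ‖` is `0` for every `p ∈ 𝒢`. -/
theorem stmt15 {R : Type*} [CommRing R] [IsDomain R] [Countable R] [Infinite R]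
    (hLID : IsLID R)
    {H : Type*} [NormedAddCommGroup H] [InnerProductSpace ℂ H] [CompleteSpace H]
    (A M : R → H →ₗᵢ[ℂ] H)
    (hAadd : ∀ (v w : R) (φ : H), A v (A w φ) = A (v + w) φ)
    (hMmul : ∀ (u w : R), u ≠ 0 → w ≠ 0 → ∀ φ : H, M u (M w φ) = M (u * w) φ)
    (hAM : ∀ (v u : R), u ≠ 0 → ∀ φ : H, A v (M u φ) = M u (A (v * u) φ))
    (φ : H) (hφ : addOrbitCompact A φ) :
    (∀ ε : ℝ, 0 < ε → ∀ p ∈ dcG R, {u : R | ‖A u φ - φ‖ < ε} ∈ p) ∧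
      (∀ p ∈ dcG R, Filter.Tendsto (fun u : R => ‖A u φ - φ‖) ↑p (nhds 0)) := by
  have main : ∀ ε : ℝ, 0 < ε → ∀ p ∈ dcG R, {u : R | ‖A u φ - φ‖ < ε} ∈ p := by
    intro ε hε p hpG
    have hsub : AMI R ⊆ {q : Ultrafilter R | {u : R | ‖A u φ - φ‖ < ε} ∈ q} :=
      fun q hq => key A hAadd φ hφ q hq.2.1 ε hε
    exact closure_minimal hsub (ultrafilter_isClosed_basic _) hpG.1
  refine ⟨main, ?_⟩
  intro p hp
  rw [Metric.tendsto_nhds]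
  intro ε hε
  filter_upwards [main ε hε p hp] with u hu
  simpa [Real.dist_eq, abs_of_nonneg (norm_nonneg _)] using hu
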